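/- arXiv:2603.21373 — 3 statements merged into one kernel-verified Lean document; each statement's English description precedes it below -/
import Mathlib

section
/- Gumbel-max trick (argmax case): if g_1,…,g_n are i.i.d. standard Gumbel random variables and θ ∈ ℝ^n, then P(argmax_i (θ_i + g_i) = k) = exp(θ_k)/∑_{j=1}^n exp(θ_j) for each k, and the argmax is almost surely unique. -/
open MeasureTheory ProbabilityTheory Set Filter Topology

noncomputable def gumbelF (t : ℝ) : ℝ := Real.exp (-Real.exp (-t))

lemma gumbelF_cont : Continuous gumbelF := by
  unfold gumbelF; continuity

lemma gumbelF_nonneg (t : ℝ) : 0 ≤ gumbelF t := (Real.exp_pos _).le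

lemma nu_Iio {ν : Measure ℝ} [IsProbabilityMeasure ν]
    (hν : ∀ t, ν (Iic t) = ENNReal.ofReal (gumbelF t)) (t : ℝ) :
    ν (Iio t) = ENNReal.ofReal (gumbelF t) := by
  have hU : Iio t = ⋃ m : ℕ, Iic (t - 1/(m+1)) := by
    ext x
    simp only [mem_Iio, mem_iUnion, mem_Iic]
    constructor
    · intro hx
      obtain ⟨m, hm⟩ := exists_nat_one_div_lt (sub_pos.mpr hx)
      exact ⟨m, by linarith⟩
    · rintro ⟨m, hm⟩
      have h0 : (0:ℝ) < 1/((m:ℝ)+1) := by positivity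
      linarith
  have hmono : Monotone (fun m : ℕ => Iic (t - 1/((m:ℝ)+1))) := by
    intro a b hab
    apply Iic_subset_Iic.mpr
    have : (1:ℝ)/((b:ℝ)+1) ≤ 1/((a:ℝ)+1) := by
      apply one_div_le_one_div_of_le (by positivity)
      exact_mod_cast Nat.add_le_add_right hab 1
    linarith
  have h1 : Tendsto (fun m : ℕ => ν (Iic (t - 1/((m:ℝ)+1)))) atTop (nhds (ν (Iio t))) := by
    rw [hU]; exact tendsto_measure_iUnion_atTop hmono
  have h2 : Tendsto (fun m : ℕ => ν (Iic (t - 1/((m:ℝ)+1)))) atTop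
      (nhds (ENNReal.ofReal (gumbelF t))) := by
    simp_rw [hν]
    refine (ENNReal.continuous_ofReal.tendsto _).comp ?_
    refine ((gumbelF_cont.tendsto t).comp ?_)
    have : Tendsto (fun m : ℕ => t - 1/((m:ℝ)+1)) atTop (nhds (t - 0)) :=
      tendsto_const_nhds.sub tendsto_one_div_add_atTop_nhds_zero_nat
    simpa using this
  exact tendsto_nhds_unique h1 h2

lemma nu_singleton {ν : Measure ℝ} [IsProbabilityMeasure ν]
    (hν : ∀ t, ν (Iic t) = ENNReal.ofReal (gumbelF t)) (t : ℝ) :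
    ν {t} = 0 := by
  have h : {t} = Iic t \ Iio t := by
    ext x; simp only [mem_singleton_iff, mem_diff, mem_Iic, mem_Iio, not_lt]
    constructor
    · rintro rfl; exact ⟨le_refl _, le_refl _⟩
    · rintro ⟨h1, h2⟩; exact le_antisymm h1 h2
  rw [h, measure_diff Iio_subset_Iic_self measurableSet_Iio.nullMeasurableSet
    (measure_ne_top ν _), hν, nu_Iio hν, tsub_self]

lemma nu_Ioi {ν : Measure ℝ} [IsProbabilityMeasure ν]
    (hν : ∀ t, ν (Iic t) = ENNReal.ofReal (gumbelF t)) (t : ℝ) :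
    ν (Ioi t) = ENNReal.ofReal (1 - gumbelF t) := by
  have h : Ioi t = (Iic t)ᶜ := by simp
  rw [h, measure_compl measurableSet_Iic (measure_ne_top ν _), hν, measure_univ,
    ENNReal.ofReal_sub _ (gumbelF_nonneg t), ENNReal.ofReal_one]


lemma key_integral {ν : Measure ℝ} [IsProbabilityMeasure ν]
    (hν : ∀ t, ν (Iic t) = ENNReal.ofReal (gumbelF t)) {a : ℝ} (ha : 0 ≤ a) :
    ∫⁻ y, ENNReal.ofReal (Real.exp (-a * Real.exp (-y))) ∂ν
      = ENNReal.ofReal (1 / (1 + a)) := by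
  rcases eq_or_lt_of_le ha with rfl | hpos
  · simp
  have hmble : Measurable fun y : ℝ => Real.exp (-a * Real.exp (-y)) := by fun_prop
  rw [lintegral_eq_lintegral_meas_lt ν
    (Eventually.of_forall fun y => (Real.exp_pos _).le) hmble.aemeasurable]
  -- pointwise description of the superlevel sets
  have hset : ∀ t ∈ Ioi (0:ℝ), ν {y : ℝ | t < Real.exp (-a * Real.exp (-y))}
      = (Ioo (0:ℝ) 1).indicator (fun t => ENNReal.ofReal (1 - t ^ (1/a))) t := by
    intro t ht
    rw [mem_Ioi] at ht
    rcases lt_or_ge t 1 with ht1 | ht1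
    · have htmem : t ∈ Ioo (0:ℝ) 1 := ⟨ht, ht1⟩
      rw [indicator_of_mem htmem]
      have hlogt : Real.log t < 0 := Real.log_neg ht ht1
      have hpos' : 0 < -Real.log t / a := div_pos (by linarith) hpos
      have hsetEq : {y : ℝ | t < Real.exp (-a * Real.exp (-y))}
          = Ioi (-Real.log (-Real.log t / a)) := by
        ext y
        simp only [mem_setOf_eq, mem_Ioi]
        rw [← Real.log_lt_iff_lt_exp ht]
        constructor
        · intro h
          have h2 : Real.exp (-y) < -Real.log t / a := by
            rw [lt_div_iff₀ hpos]
            nlinarith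
          have := (Real.lt_log_iff_exp_lt hpos').mpr h2
          linarith
        · intro h
          have h2 : -y < Real.log (-Real.log t / a) := by linarith
          have h3 := (Real.lt_log_iff_exp_lt hpos').mp h2
          rw [lt_div_iff₀ hpos] at h3
          nlinarith
      rw [hsetEq, nu_Ioi hν]
      congr 1
      have : gumbelF (-Real.log (-Real.log t / a)) = t ^ (1/a) := by
        unfold gumbelF
        rw [neg_neg, Real.exp_log hpos', Real.rpow_def_of_pos ht]
        congr 1
        field_simp
      rw [this]
    · have : {y : ℝ | t < Real.exp (-a * Real.exp (-y))} = ∅ := by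
        ext y
        simp only [mem_setOf_eq, mem_empty_iff_false, iff_false, not_lt]
        have : Real.exp (-a * Real.exp (-y)) < 1 := by
          apply Real.exp_lt_one_iff.mpr
          have := Real.exp_pos (-y)
          nlinarith
        linarith
      rw [this, indicator_of_notMem (fun h : t ∈ Ioo (0:ℝ) 1 => absurd h.2 (not_lt.mpr ht1))]
      simp
  rw [setLIntegral_congr_fun measurableSet_Ioi hset]
  rw [lintegral_indicator measurableSet_Ioo, Measure.restrict_restrict measurableSet_Ioo,
    inter_eq_left.mpr (fun x hx => hx.1)]
  -- now a genuine integral over (0,1)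
  have hcontr : Continuous fun t : ℝ => t ^ (1/a) := by
    apply continuous_iff_continuousAt.mpr
    intro x
    exact Real.continuousAt_rpow_const x _ (Or.inr (by positivity))
  have hcont : Continuous fun t : ℝ => 1 - t ^ (1/a) := continuous_const.sub hcontr
  have hint : IntegrableOn (fun t : ℝ => 1 - t ^ (1/a)) (Ioo 0 1) :=
    (hcont.integrableOn_Icc (a := 0) (b := 1)).mono_set Ioo_subset_Icc_self
  rw [← ofReal_integral_eq_lintegral_ofReal hint]
  · congr 1
    rw [← integral_Ioc_eq_integral_Ioo, ← intervalIntegral.integral_of_le zero_le_one]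
    have h1a : (-1:ℝ) < 1/a := by have := one_div_pos.mpr hpos; linarith
    rw [intervalIntegral.integral_sub intervalIntegrable_const
      (intervalIntegral.intervalIntegrable_rpow (Or.inl (by positivity)))]
    rw [integral_rpow (Or.inl h1a)]
    simp only [intervalIntegral.integral_const, smul_eq_mul, mul_one, sub_zero,
      Real.one_rpow, Real.zero_rpow (by positivity : (1:ℝ)/a + 1 ≠ 0)]
    have h0 : (0:ℝ) < 1/a + 1 := by positivity
    have h1 : (0:ℝ) < 1 + a := by linarith
    field_simp
    try ring
  · filter_upwards [ae_restrict_mem measurableSet_Ioo] with t ht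
    have h2 : t ^ (1/a) ≤ 1 := Real.rpow_le_one ht.1.le ht.2.le (by positivity)
    simp only [Pi.zero_apply]
    linarith


lemma joint_law {Ω : Type*} [MeasurableSpace Ω] (μ : Measure Ω) [IsProbabilityMeasure μ]
    {n : ℕ} (g : Fin n → Ω → ℝ) (hmeas : ∀ i, Measurable (g i))
    (hindep : iIndepFun g μ) :
    μ.map (fun ω i => g i ω) = Measure.pi (fun i => μ.map (g i)) := by
  haveI : ∀ i, IsProbabilityMeasure (μ.map (g i)) :=
    fun i => Measure.isProbabilityMeasure_map (hmeas i).aemeasurable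
  symm
  apply Measure.pi_eq
  intro s hs
  rw [Measure.map_apply (measurable_pi_iff.mpr hmeas) (MeasurableSet.univ_pi hs)]
  have hpre : (fun ω i => g i ω) ⁻¹' (Set.pi univ s) = ⋂ i ∈ Finset.univ, g i ⁻¹' s i := by
    ext ω; simp [Set.mem_pi]
  rw [hpre, hindep.measure_inter_preimage_eq_mul Finset.univ (fun i _ => hs i)]
  exact Finset.prod_congr rfl fun i _ => (Measure.map_apply (hmeas i) (hs i)).symm

theorem argmax_prob {Ω : Type*} [MeasurableSpace Ω] (μ : Measure Ω) [IsProbabilityMeasure μ]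
    (m : ℕ) (θ : Fin (m+1) → ℝ) (g : Fin (m+1) → Ω → ℝ)
    (hmeas : ∀ i, Measurable (g i))
    (hindep : iIndepFun g μ)
    (hgumbel : ∀ i t, μ {ω | g i ω ≤ t} = ENNReal.ofReal (Real.exp (-Real.exp (-t))))
    (k : Fin (m+1)) :
    μ {ω | ∀ j, j ≠ k → θ j + g j ω < θ k + g k ω}
      = ENNReal.ofReal (Real.exp (θ k) / ∑ j, Real.exp (θ j)) := by
  classical
  set ν : Fin (m+1) → Measure ℝ := fun i => μ.map (g i) with hνdef
  haveI hp : ∀ i, IsProbabilityMeasure (ν i) :=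
    fun i => Measure.isProbabilityMeasure_map (hmeas i).aemeasurable
  have hIic : ∀ i t, ν i (Iic t) = ENNReal.ofReal (gumbelF t) := by
    intro i t
    rw [hνdef]
    rw [Measure.map_apply (hmeas i) measurableSet_Iic]
    exact hgumbel i t
  have hG : Measurable (fun ω i => g i ω) := measurable_pi_iff.mpr hmeas
  have hmap : μ.map (fun ω i => g i ω) = Measure.pi ν := joint_law μ g hmeas hindep
  set A : Set (Fin (m+1) → ℝ) := {x | ∀ j, j ≠ k → θ j + x j < θ k + x k} with hA
  have hAmeas : MeasurableSet A := by
    have hA2 : A = ⋂ j, {x : Fin (m+1) → ℝ | j ≠ k → θ j + x j < θ k + x k} := by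
      ext x; simp [hA, Set.mem_iInter]
    rw [hA2]
    refine MeasurableSet.iInter fun j => ?_
    by_cases hj : j = k
    · simp [hj]
    · have : {x : Fin (m+1) → ℝ | j ≠ k → θ j + x j < θ k + x k}
          = {x | θ j + x j < θ k + x k} := by ext x; simp [hj]
      rw [this]
      exact measurableSet_lt (measurable_const.add (measurable_pi_apply j))
        (measurable_const.add (measurable_pi_apply k))
  have hEA : {ω | ∀ j, j ≠ k → θ j + g j ω < θ k + g k ω} = (fun ω i => g i ω) ⁻¹' A := rfl
  rw [hEA, ← Measure.map_apply hG hAmeas, hmap]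
  set B : Set (ℝ × (Fin m → ℝ)) := {p | ∀ j, θ (k.succAbove j) + p.2 j < θ k + p.1} with hB
  have hBmeas : MeasurableSet B := by
    have hB2 : B = ⋂ j, {p : ℝ × (Fin m → ℝ) | θ (k.succAbove j) + p.2 j < θ k + p.1} := by
      ext p; simp [hB, Set.mem_iInter]
    rw [hB2]
    exact MeasurableSet.iInter fun j => measurableSet_lt (by fun_prop) (by fun_prop)
  have hpre : MeasurableEquiv.piFinSuccAbove (fun _ => ℝ) k ⁻¹' B = A := by
    ext x
    simp only [hB, hA, MeasurableEquiv.piFinSuccAbove_apply, mem_preimage, mem_setOf_eq,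
      Fin.insertNthEquiv, Equiv.coe_fn_symm_mk, Fin.removeNth]
    constructor
    · intro h j hj
      obtain ⟨j', rfl⟩ := Fin.exists_succAbove_eq hj
      exact h j'
    · intro h j
      exact h _ (Fin.succAbove_ne k j)
  rw [← hpre, ← Measure.map_apply (MeasurableEquiv.piFinSuccAbove (fun _ => ℝ) k).measurable hBmeas,
    (measurePreserving_piFinSuccAbove ν k).map_eq, Measure.prod_apply hBmeas]
  set S : ℝ := ∑ j : Fin m, Real.exp (θ (k.succAbove j)) with hS
  have hfib : ∀ y : ℝ, (Measure.pi fun j => ν (k.succAbove j)) (Prod.mk y ⁻¹' B)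
      = ENNReal.ofReal (Real.exp (-(S * Real.exp (-θ k)) * Real.exp (-y))) := by
    intro y
    have h1 : Prod.mk y ⁻¹' B = Set.pi univ (fun j => Iio (θ k + y - θ (k.succAbove j))) := by
      ext z
      simp only [hB, mem_preimage, mem_setOf_eq, Set.mem_pi, mem_univ, true_implies, mem_Iio]
      constructor <;> intro h j <;> have := h j <;> linarith
    rw [h1, Measure.pi_pi]
    have h2 : ∀ j : Fin m, ν (k.succAbove j) (Iio (θ k + y - θ (k.succAbove j)))
        = ENNReal.ofReal (gumbelF (θ k + y - θ (k.succAbove j))) :=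
      fun j => nu_Iio (hIic _) _
    simp_rw [h2]
    rw [← ENNReal.ofReal_prod_of_nonneg (fun j _ => gumbelF_nonneg _)]
    congr 1
    unfold gumbelF
    rw [← Real.exp_sum]
    congr 1
    have h3 : ∀ j : Fin m, -Real.exp (-(θ k + y - θ (k.succAbove j)))
        = -(Real.exp (θ (k.succAbove j)) * (Real.exp (-θ k) * Real.exp (-y))) := by
      intro j
      rw [← Real.exp_add, ← Real.exp_add]
      ring_nf
    simp_rw [h3]
    rw [Finset.sum_neg_distrib, ← Finset.sum_mul, ← hS]
    ring
  simp_rw [hfib]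
  rw [key_integral (hIic k) (mul_nonneg (by rw [hS]; positivity) (Real.exp_pos _).le)]
  congr 1
  rw [Fin.sum_univ_succAbove (fun j => Real.exp (θ j)) k, ← hS]
  have h0 : (0:ℝ) < Real.exp (θ k) := Real.exp_pos _
  have h1 : (0:ℝ) ≤ S := by rw [hS]; positivity
  rw [Real.exp_neg]
  have hi : (0:ℝ) < (Real.exp (θ k))⁻¹ := inv_pos.mpr h0
  have hd1 : (0:ℝ) < 1 + S * (Real.exp (θ k))⁻¹ := by nlinarith
  have hd2 : (0:ℝ) < Real.exp (θ k) + S := by linarith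
  rw [div_eq_div_iff hd1.ne' hd2.ne']
  field_simp


lemma pair_null {Ω : Type*} [MeasurableSpace Ω] (μ : Measure Ω) [IsProbabilityMeasure μ]
    {n : ℕ} (θ : Fin n → ℝ) (g : Fin n → Ω → ℝ)
    (hmeas : ∀ i, Measurable (g i))
    (hindep : iIndepFun g μ)
    (hgumbel : ∀ i t, μ {ω | g i ω ≤ t} = ENNReal.ofReal (Real.exp (-Real.exp (-t))))
    (i j : Fin n) (hij : i ≠ j) :
    μ {ω | θ i + g i ω = θ j + g j ω} = 0 := by
  haveI : IsProbabilityMeasure (μ.map (g j)) :=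
    Measure.isProbabilityMeasure_map (hmeas j).aemeasurable
  have hIic : ∀ t, μ.map (g j) (Iic t) = ENNReal.ofReal (gumbelF t) := by
    intro t
    rw [Measure.map_apply (hmeas j) measurableSet_Iic]
    exact hgumbel j t
  have hind : IndepFun (g i) (g j) μ := hindep.indepFun hij
  have hmap : μ.map (fun ω => (g i ω, g j ω)) = (μ.map (g i)).prod (μ.map (g j)) :=
    (indepFun_iff_map_prod_eq_prod_map_map (hmeas i).aemeasurable
      (hmeas j).aemeasurable).mp hind
  have hBmeas : MeasurableSet {p : ℝ × ℝ | θ i + p.1 = θ j + p.2} :=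
    measurableSet_eq_fun (by fun_prop) (by fun_prop)
  have hE : {ω | θ i + g i ω = θ j + g j ω}
      = (fun ω => (g i ω, g j ω)) ⁻¹' {p : ℝ × ℝ | θ i + p.1 = θ j + p.2} := rfl
  rw [hE, ← Measure.map_apply ((hmeas i).prodMk (hmeas j)) hBmeas, hmap,
    Measure.prod_apply hBmeas]
  have hz : ∀ x : ℝ, (μ.map (g j)) (Prod.mk x ⁻¹' {p : ℝ × ℝ | θ i + p.1 = θ j + p.2}) = 0 := by
    intro x
    have : Prod.mk x ⁻¹' {p : ℝ × ℝ | θ i + p.1 = θ j + p.2} = {θ i + x - θ j} := by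
      ext y
      simp only [mem_preimage, mem_setOf_eq, mem_singleton_iff]
      constructor <;> intro h <;> linarith
    rw [this]
    exact nu_singleton hIic _
  simp only [hz, lintegral_zero]

/-- Gumbel-max trick: with i.i.d. standard Gumbel perturbations g_i and logits θ,
the argmax of θ_i + g_i is almost surely unique, and equals k with the softmax
probability exp(θ k) / ∑ j exp(θ j). -/
theorem gumbel_max_trick {Ω : Type*} [MeasurableSpace Ω]
    (μ : Measure Ω) [IsProbabilityMeasure μ]
    (n : ℕ) (θ : Fin n → ℝ) (g : Fin n → Ω → ℝ)
    (hmeas : ∀ i, Measurable (g i))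
    (hindep : iIndepFun g μ)
    (hgumbel : ∀ i t, μ {ω | g i ω ≤ t} = ENNReal.ofReal (Real.exp (-Real.exp (-t)))) :
    (μ {ω | ∃ i j, i ≠ j ∧ θ i + g i ω = θ j + g j ω} = 0) ∧
    ∀ k : Fin n,
      μ {ω | ∀ j, j ≠ k → θ j + g j ω < θ k + g k ω}
        = ENNReal.ofReal (Real.exp (θ k) / ∑ j : Fin n, Real.exp (θ j)) := by
  constructor
  · have hU : {ω | ∃ i j, i ≠ j ∧ θ i + g i ω = θ j + g j ω}
        = ⋃ i, ⋃ j, {ω | i ≠ j ∧ θ i + g i ω = θ j + g j ω} := by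
      ext ω; simp only [mem_setOf_eq, mem_iUnion]
    rw [hU]
    refine measure_iUnion_null fun i => measure_iUnion_null fun j => ?_
    by_cases hij : i = j
    · subst hij
      have : {ω | i ≠ i ∧ θ i + g i ω = θ i + g i ω} = (∅ : Set Ω) := by
        ext ω; simp
      simp [this]
    · exact measure_mono_null (fun ω h => h.2)
        (pair_null μ θ g hmeas hindep hgumbel i j hij)
  · intro k
    obtain ⟨m, rfl⟩ : ∃ m, n = m + 1 := ⟨n - 1, (Nat.succ_pred_eq_of_pos k.pos).symm⟩
    exact argmax_prob μ m θ g hmeas hindep hgumbel k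
end

section
/- Gumbel perturb-and-sort samples from Plackett–Luce: if g_1,…,g_n are i.i.d. standard Gumbel and θ ∈ ℝ^n, then the random permutation π obtained by sorting the perturbed scores s_i = θ_i + g_i in strictly decreasing order (which is almost surely well-defined) satisfies P(π = σ) = ∏_{r=1}^n exp(θ_{σ(r)}) / ∑_{j=r}^n exp(θ_{σ(j)}) for every permutation σ. -/
open MeasureTheory ProbabilityTheory Set Filter Topology
open scoped ENNReal

noncomputable def gumbelCDF (w t : ℝ) : ℝ := Real.exp (-(w * Real.exp (-t)))

noncomputable def gumbelDensity (w : ℝ) (t : ℝ) : ℝ≥0∞ :=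
  ENNReal.ofReal (w * Real.exp (-t) * gumbelCDF w t)

noncomputable def gumbelMeasure (w : ℝ) : Measure ℝ := volume.withDensity (gumbelDensity w)

lemma gumbelCDF_hasDerivAt (w t : ℝ) :
    HasDerivAt (gumbelCDF w) (w * Real.exp (-t) * gumbelCDF w t) t := by
  have h1 : HasDerivAt (fun t : ℝ => -(w * Real.exp (-t))) (-(w * (Real.exp (-t) * (-1)))) t := by
    have := (((hasDerivAt_id t).neg).exp.const_mul w).neg
    exact this
  have h3 := h1.exp
  convert h3 using 1
  all_goals unfold gumbelCDF <;> ring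

lemma gumbelCDF_nonneg (w t : ℝ) : 0 ≤ gumbelCDF w t := (Real.exp_pos _).le

lemma gumbelCDF_le_one (w t : ℝ) (hw : 0 ≤ w) : gumbelCDF w t ≤ 1 := by
  rw [gumbelCDF, ← Real.exp_zero]
  exact Real.exp_le_exp.2 (by simpa using mul_nonneg hw (Real.exp_pos _).le)

lemma gumbelCDF_continuous (w : ℝ) : Continuous (gumbelCDF w) := by
  unfold gumbelCDF; continuity

lemma gumbelMeasure_Ioc {w : ℝ} (hw : 0 < w) {a c : ℝ} (hac : a ≤ c) :
    gumbelMeasure w (Ioc a c) = ENNReal.ofReal (gumbelCDF w c - gumbelCDF w a) := by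
  have hdcont : Continuous fun t => w * Real.exp (-t) * gumbelCDF w t := by
    unfold gumbelCDF; continuity
  rw [gumbelMeasure, withDensity_apply _ measurableSet_Ioc]
  have hint : IntegrableOn (fun t => w * Real.exp (-t) * gumbelCDF w t) (Ioc a c) :=
    hdcont.integrableOn_Ioc
  have hnn : 0 ≤ᵐ[volume.restrict (Ioc a c)] fun t => w * Real.exp (-t) * gumbelCDF w t :=
    Filter.Eventually.of_forall fun t =>
      mul_nonneg (mul_nonneg hw.le (Real.exp_pos _).le) (gumbelCDF_nonneg w t)
  simp only [gumbelDensity]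
  rw [← ofReal_integral_eq_lintegral_ofReal hint hnn]
  congr 1
  rw [← intervalIntegral.integral_of_le hac]
  exact intervalIntegral.integral_eq_sub_of_hasDerivAt
    (fun t _ => gumbelCDF_hasDerivAt w t) (hdcont.intervalIntegrable a c)

lemma tendsto_gumbelCDF_atBot {w : ℝ} (hw : 0 < w) :
    Tendsto (fun t => gumbelCDF w t) atBot (𝓝 0) := by
  have h1 : Tendsto (fun t : ℝ => Real.exp (-t)) atBot atTop :=
    Real.tendsto_exp_atTop.comp tendsto_neg_atBot_atTop
  have h2 : Tendsto (fun t : ℝ => -(w * Real.exp (-t))) atBot atBot :=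
    tendsto_neg_atTop_atBot.comp (h1.const_mul_atTop hw)
  exact Real.tendsto_exp_atBot.comp h2

lemma tendsto_gumbelCDF_atTop (w : ℝ) :
    Tendsto (fun t => gumbelCDF w t) atTop (𝓝 1) := by
  have h1 : Tendsto (fun t : ℝ => Real.exp (-t)) atTop (𝓝 0) :=
    Real.tendsto_exp_atBot.comp tendsto_neg_atTop_atBot
  have h2 : Tendsto (fun t : ℝ => -(w * Real.exp (-t))) atTop (𝓝 0) := by
    simpa using ((h1.const_mul w).neg)
  simpa [gumbelCDF, Function.comp_def] using Real.continuous_exp.continuousAt.tendsto.comp h2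

lemma gumbelMeasure_Iic {w : ℝ} (hw : 0 < w) (c : ℝ) :
    gumbelMeasure w (Iic c) = ENNReal.ofReal (gumbelCDF w c) := by
  have hU : Iic c = ⋃ n : ℕ, Ioc (c - n) c := by
    ext t; simp only [mem_Iic, mem_iUnion, mem_Ioc]
    constructor
    · intro ht
      obtain ⟨n, hn⟩ := exists_nat_gt (c - t)
      exact ⟨n, by linarith, ht⟩
    · rintro ⟨n, _, ht⟩; exact ht
  have hmono : Monotone fun n : ℕ => Ioc (c - n) c := fun m n hmn =>
    Ioc_subset_Ioc (by have : (m:ℝ) ≤ n := Nat.cast_le.2 hmn; linarith) le_rfl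
  have h1 : Tendsto (fun n : ℕ => gumbelMeasure w (Ioc (c - n) c)) atTop
      (𝓝 (gumbelMeasure w (Iic c))) := by
    rw [hU]; exact tendsto_measure_iUnion_atTop hmono
  have h2 : Tendsto (fun n : ℕ => gumbelMeasure w (Ioc (c - n) c)) atTop
      (𝓝 (ENNReal.ofReal (gumbelCDF w c))) := by
    have he : ∀ n : ℕ, gumbelMeasure w (Ioc (c - n) c)
        = ENNReal.ofReal (gumbelCDF w c - gumbelCDF w (c - n)) := fun n =>
      gumbelMeasure_Ioc hw (by simp)
    simp only [he]
    have hb : Tendsto (fun n : ℕ => (c - n : ℝ)) atTop atBot := by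
      apply tendsto_atBot_add_const_left _ c
      exact tendsto_neg_atTop_atBot.comp tendsto_natCast_atTop_atTop
    have := ((tendsto_gumbelCDF_atBot hw).comp hb).const_sub (gumbelCDF w c)
    simpa using (ENNReal.tendsto_ofReal (by simpa using this))
  exact tendsto_nhds_unique h1 h2

lemma gumbelMeasure_univ {w : ℝ} (hw : 0 < w) : gumbelMeasure w univ = 1 := by
  have hU : (univ : Set ℝ) = ⋃ n : ℕ, Iic (n : ℝ) := by
    ext t; simp only [mem_univ, mem_iUnion, mem_Iic, true_iff]
    obtain ⟨n, hn⟩ := exists_nat_gt t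
    exact ⟨n, hn.le⟩
  have hmono : Monotone fun n : ℕ => Iic (n : ℝ) := fun m n hmn =>
    Iic_subset_Iic.2 (Nat.cast_le.2 hmn)
  have h1 : Tendsto (fun n : ℕ => gumbelMeasure w (Iic (n : ℝ))) atTop
      (𝓝 (gumbelMeasure w univ)) := by
    rw [hU]; exact tendsto_measure_iUnion_atTop hmono
  have h2 : Tendsto (fun n : ℕ => gumbelMeasure w (Iic (n : ℝ))) atTop (𝓝 1) := by
    simp only [fun n : ℕ => gumbelMeasure_Iic hw (n : ℝ)]
    have := (tendsto_gumbelCDF_atTop w).comp tendsto_natCast_atTop_atTop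
    simpa using (ENNReal.tendsto_ofReal this)
  exact tendsto_nhds_unique h1 h2

lemma gumbelMeasure_isProbability {w : ℝ} (hw : 0 < w) :
    IsProbabilityMeasure (gumbelMeasure w) := ⟨gumbelMeasure_univ hw⟩

lemma gumbelMeasure_Iio {w : ℝ} (hw : 0 < w) (c : ℝ) :
    gumbelMeasure w (Iio c) = ENNReal.ofReal (gumbelCDF w c) := by
  have hs : gumbelMeasure w {c} = 0 := by
    rw [gumbelMeasure, withDensity_apply _ (measurableSet_singleton c)]
    exact setLIntegral_measure_zero _ _ (measure_singleton c)
  rw [← gumbelMeasure_Iic hw c, ← Iic_diff_right]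
  exact measure_diff_null hs
lemma gumbelDensity_measurable (w : ℝ) : Measurable (gumbelDensity w) := by
  apply ENNReal.measurable_ofReal.comp
  exact (continuous_const.mul (Real.continuous_exp.comp continuous_neg)).mul
    (gumbelCDF_continuous w) |>.measurable

lemma gumbel_key_integral {w v : ℝ} (hw : 0 < w) (hv : 0 ≤ v) {s : Set ℝ}
    (hs : MeasurableSet s) :
    ∫⁻ t in s, ENNReal.ofReal (gumbelCDF v t) ∂(gumbelMeasure w)
      = ENNReal.ofReal (w / (w + v)) * gumbelMeasure (w + v) s := by
  have hwv : 0 < w + v := by linarith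
  have hpt : ∀ t, gumbelDensity w t * ENNReal.ofReal (gumbelCDF v t)
      = ENNReal.ofReal (w / (w + v)) * gumbelDensity (w + v) t := by
    intro t
    simp only [gumbelDensity]
    rw [← ENNReal.ofReal_mul (mul_nonneg (mul_nonneg hw.le (Real.exp_pos _).le)
      (gumbelCDF_nonneg _ _)), ← ENNReal.ofReal_mul (div_nonneg hw.le hwv.le)]
    congr 1
    have hmul : gumbelCDF w t * gumbelCDF v t = gumbelCDF (w + v) t := by
      simp only [gumbelCDF, ← Real.exp_add]; ring_nf
    have : w * Real.exp (-t) * gumbelCDF w t * gumbelCDF v t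
        = (w / (w + v)) * ((w + v) * Real.exp (-t) * (gumbelCDF w t * gumbelCDF v t)) := by
      field_simp
    rw [this, hmul]
  calc ∫⁻ t in s, ENNReal.ofReal (gumbelCDF v t) ∂(gumbelMeasure w)
      = ∫⁻ t in s, gumbelDensity w t * ENNReal.ofReal (gumbelCDF v t) ∂volume := by
        rw [gumbelMeasure, restrict_withDensity hs,
          lintegral_withDensity_eq_lintegral_mul _ (gumbelDensity_measurable w)
            ((gumbelCDF_continuous v).measurable.ennreal_ofReal)]
        rfl
    _ = ∫⁻ t in s, ENNReal.ofReal (w / (w + v)) * gumbelDensity (w + v) t ∂volume := by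
        simp only [hpt]
    _ = ENNReal.ofReal (w / (w + v)) * gumbelMeasure (w + v) s := by
        rw [lintegral_const_mul _ (gumbelDensity_measurable (w + v)),
          gumbelMeasure, withDensity_apply _ hs]
def decSet (n : ℕ) : Set (Fin n → ℝ) := {x | ∀ r s : Fin n, r < s → x s < x r}

lemma decSet_measurable (n : ℕ) : MeasurableSet (decSet n) := by
  have : decSet n = ⋂ (r : Fin n) (s : Fin n) (_ : r < s), {x : Fin n → ℝ | x s < x r} := by
    ext x; simp [decSet, Set.mem_iInter]
  rw [this]
  exact MeasurableSet.iInter fun r => MeasurableSet.iInter fun s =>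
    MeasurableSet.iInter fun _ =>
      measurableSet_lt (measurable_pi_apply s) (measurable_pi_apply r)

lemma decSet_one : decSet 1 = Set.univ := by
  ext x
  simp only [decSet, Set.mem_setOf_eq, Set.mem_univ, iff_true]
  intro r s hrs
  exact absurd (Subsingleton.elim r s) (ne_of_lt hrs)

lemma mem_decSet_succ {n : ℕ} (x : Fin (n + 2) → ℝ) :
    x ∈ decSet (n + 2) ↔ ((fun j => x j.castSucc) ∈ decSet (n + 1)
      ∧ x (Fin.last (n + 1)) < x ((Fin.last n).castSucc)) := by
  constructor
  · intro hx
    refine ⟨fun r s hrs => hx _ _ (by simpa using hrs), hx _ _ ?_⟩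
    exact Fin.castSucc_lt_last _
  · rintro ⟨hy, ha⟩ r s hrs
    induction s using Fin.lastCases with
    | last =>
      induction r using Fin.lastCases with
      | last => exact absurd hrs (lt_irrefl _)
      | cast r' =>
        rcases eq_or_lt_of_le (Fin.le_last r') with h | h
        · rw [h]; exact ha
        · exact lt_trans ha (hy _ _ h)
    | cast s' =>
      induction r using Fin.lastCases with
      | last => exact absurd (lt_trans hrs (Fin.castSucc_lt_last s')) (lt_irrefl _)
      | cast r' => exact hy _ _ (by simpa using hrs)

lemma Ici_eq_filter {m : ℕ} (a : Fin m) :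
    Finset.Ici a = Finset.univ.filter (fun j => a ≤ j) := by
  ext j; simp

lemma sum_Ici_castSucc {m : ℕ} (w : Fin (m + 1) → ℝ) (r : Fin m) :
    ∑ j ∈ Finset.Ici r.castSucc, w j
      = (∑ j ∈ Finset.Ici r, w j.castSucc) + w (Fin.last m) := by
  rw [Ici_eq_filter, Ici_eq_filter, Finset.sum_filter, Finset.sum_filter,
    Fin.sum_univ_castSucc]
  simp [Fin.le_last, Fin.castSucc_le_castSucc_iff]

lemma Ici_last {m : ℕ} : Finset.Ici (Fin.last m) = {Fin.last m} := by
  ext j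
  simp [Finset.mem_Ici, Fin.last_le_iff]
lemma keyB (n : ℕ) : ∀ (w : Fin (n + 1) → ℝ), (∀ i, 0 < w i) → ∀ v : ℝ, 0 ≤ v →
    ∫⁻ x in decSet (n + 1), ENNReal.ofReal (gumbelCDF v (x (Fin.last n)))
        ∂(Measure.pi fun i => gumbelMeasure (w i))
      = ENNReal.ofReal (∏ r : Fin (n + 1), w r / ((∑ j ∈ Finset.Ici r, w j) + v)) := by
  induction n with
  | zero =>
    intro w hw v hv
    haveI : ∀ i : Fin 1, IsProbabilityMeasure (gumbelMeasure (w i)) :=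
      fun i => gumbelMeasure_isProbability (hw i)
    have hconst : (fun i : Fin 1 => gumbelMeasure (w i)) = fun _ => gumbelMeasure (w 0) := by
      funext i; rw [Subsingleton.elim i 0]
    rw [decSet_one, Measure.restrict_univ, hconst]
    have hmp := measurePreserving_funUnique (gumbelMeasure (w 0)) (Fin 1)
    have hint := hmp.lintegral_comp (f := fun t => ENNReal.ofReal (gumbelCDF v t))
      ((gumbelCDF_continuous v).measurable.ennreal_ofReal)
    calc ∫⁻ x : Fin 1 → ℝ, ENNReal.ofReal (gumbelCDF v (x (Fin.last 0)))
            ∂(Measure.pi fun _ => gumbelMeasure (w 0))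
        = ∫⁻ t, ENNReal.ofReal (gumbelCDF v t) ∂(gumbelMeasure (w 0)) := hint
      _ = ENNReal.ofReal (w 0 / (w 0 + v)) * gumbelMeasure (w 0 + v) Set.univ := by
          rw [← gumbel_key_integral (hw 0) hv MeasurableSet.univ, Measure.restrict_univ]
      _ = ENNReal.ofReal (∏ r : Fin 1, w r / ((∑ j ∈ Finset.Ici r, w j) + v)) := by
          haveI := gumbelMeasure_isProbability (show (0:ℝ) < w 0 + v by linarith [hw 0])
          rw [measure_univ, mul_one, Fin.prod_univ_one]
          congr 2
          have h0 : Finset.Ici (0 : Fin 1) = {0} := rfl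
          rw [h0, Finset.sum_singleton]
  | succ n ih =>
    intro w hw v hv
    haveI hprob : ∀ i, IsProbabilityMeasure (gumbelMeasure (w i)) :=
      fun i => gumbelMeasure_isProbability (hw i)
    have hwl : 0 < w (Fin.last (n + 1)) := hw _
    have hwlv : 0 < w (Fin.last (n + 1)) + v := by linarith
    set L : Fin (n + 2) := Fin.last (n + 1) with hL
    set e := MeasurableEquiv.piFinSuccAbove (fun _ : Fin (n + 2) => ℝ) L with he
    have hmp := measurePreserving_piFinSuccAbove (fun i => gumbelMeasure (w i)) L
    set F : (Fin (n + 2) → ℝ) → ℝ≥0∞ := (decSet (n + 2)).indicator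
      (fun x => ENNReal.ofReal (gumbelCDF v (x L))) with hFdef
    have hFmeas : Measurable F :=
      (((gumbelCDF_continuous v).measurable.comp (measurable_pi_apply L)).ennreal_ofReal).indicator
        (decSet_measurable _)
    have hsymm_last : ∀ (a : ℝ) (y : Fin (n + 1) → ℝ), (e.symm (a, y)) L = a := by
      intro a y
      simp [he, MeasurableEquiv.piFinSuccAbove_symm_apply, Fin.insertNthEquiv,
        Fin.insertNth_apply_same]
    have hsymm_cast : ∀ (a : ℝ) (y : Fin (n + 1) → ℝ) (j : Fin (n + 1)),
        (e.symm (a, y)) j.castSucc = y j := by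
      intro a y j
      have hj : j.castSucc = L.succAbove j := by rw [hL, Fin.succAbove_last]
      rw [hj]
      simp [he, MeasurableEquiv.piFinSuccAbove_symm_apply, Fin.insertNthEquiv,
        Fin.insertNth_apply_succAbove]
    have hinner : ∀ y : Fin (n + 1) → ℝ,
        ∫⁻ a, F (e.symm (a, y)) ∂(gumbelMeasure (w L))
          = (decSet (n + 1)).indicator (fun z =>
              ENNReal.ofReal (w L / (w L + v))
                * ENNReal.ofReal (gumbelCDF (w L + v) (z (Fin.last n)))) y := by
      intro y
      have hxcast : ∀ a : ℝ, (fun j => (e.symm (a, y)) j.castSucc) = y :=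
        fun a => funext (hsymm_cast a y)
      by_cases hy : y ∈ decSet (n + 1)
      · have hmem : ∀ a : ℝ, (e.symm (a, y) ∈ decSet (n + 2)) ↔ a < y (Fin.last n) := by
          intro a
          rw [mem_decSet_succ, hxcast a, hsymm_last a y, hsymm_cast a y (Fin.last n)]
          simp [hy]
        have hptwise : ∀ a : ℝ, F (e.symm (a, y))
            = (Set.Iio (y (Fin.last n))).indicator
                (fun a => ENNReal.ofReal (gumbelCDF v a)) a := by
          intro a
          by_cases ha : a < y (Fin.last n)
          · rw [hFdef, Set.indicator_of_mem ((hmem a).mpr ha), Set.indicator_of_mem (Set.mem_Iio.mpr ha),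
              hsymm_last a y]
          · rw [hFdef, Set.indicator_of_notMem (fun hc => ha ((hmem a).mp hc)),
              Set.indicator_of_notMem (by simpa using ha)]
        calc ∫⁻ a, F (e.symm (a, y)) ∂(gumbelMeasure (w L))
            = ∫⁻ a, (Set.Iio (y (Fin.last n))).indicator
                (fun a => ENNReal.ofReal (gumbelCDF v a)) a ∂(gumbelMeasure (w L)) := by
              simp_rw [hptwise]
          _ = ∫⁻ a in Set.Iio (y (Fin.last n)), ENNReal.ofReal (gumbelCDF v a)
                ∂(gumbelMeasure (w L)) := lintegral_indicator measurableSet_Iio _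
          _ = ENNReal.ofReal (w L / (w L + v)) * gumbelMeasure (w L + v)
                (Set.Iio (y (Fin.last n))) := gumbel_key_integral hwl hv measurableSet_Iio
          _ = (decSet (n + 1)).indicator (fun z =>
                ENNReal.ofReal (w L / (w L + v))
                  * ENNReal.ofReal (gumbelCDF (w L + v) (z (Fin.last n)))) y := by
              rw [gumbelMeasure_Iio hwlv, Set.indicator_of_mem hy]
      · have hptwise : ∀ a : ℝ, F (e.symm (a, y)) = 0 := by
          intro a
          rw [hFdef]
          apply Set.indicator_of_notMem
          intro hc
          rw [mem_decSet_succ, hxcast a] at hc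
          exact hy hc.1
        simp_rw [hptwise]
        rw [lintegral_zero, Set.indicator_of_notMem hy]
    haveI : SFinite (gumbelMeasure (w L)) := inferInstance
    have halg : (w L / (w L + v)) * ∏ r : Fin (n + 1),
          w (L.succAbove r) / ((∑ j ∈ Finset.Ici r, w (L.succAbove j)) + (w L + v))
        = ∏ r : Fin (n + 2), w r / ((∑ j ∈ Finset.Ici r, w j) + v) := by
      simp only [hL, Fin.succAbove_last]
      conv_rhs => rw [Fin.prod_univ_castSucc]
      rw [Ici_last, Finset.sum_singleton, mul_comm]
      congr 1
      apply Finset.prod_congr rfl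
      intro r _
      rw [sum_Ici_castSucc]
      ring
    calc ∫⁻ x in decSet (n + 1 + 1), ENNReal.ofReal (gumbelCDF v (x L))
            ∂(Measure.pi fun i => gumbelMeasure (w i))
        = ∫⁻ x, F x ∂(Measure.pi fun i => gumbelMeasure (w i)) :=
          (lintegral_indicator (decSet_measurable _) _).symm
      _ = ∫⁻ p, F (e.symm p)
            ∂((gumbelMeasure (w L)).prod
              (Measure.pi fun j => gumbelMeasure (w (L.succAbove j)))) :=
          ((MeasurePreserving.symm e hmp).lintegral_comp hFmeas).symm
      _ = ∫⁻ y, (∫⁻ a, F (e.symm (a, y)) ∂(gumbelMeasure (w L)))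
            ∂(Measure.pi fun j => gumbelMeasure (w (L.succAbove j))) :=
          lintegral_prod_symm' _ (hFmeas.comp e.symm.measurable)
      _ = ∫⁻ y, (decSet (n + 1)).indicator (fun z =>
              ENNReal.ofReal (w L / (w L + v))
                * ENNReal.ofReal (gumbelCDF (w L + v) (z (Fin.last n)))) y
            ∂(Measure.pi fun j => gumbelMeasure (w (L.succAbove j))) :=
          lintegral_congr hinner
      _ = ∫⁻ y in decSet (n + 1), ENNReal.ofReal (w L / (w L + v))
              * ENNReal.ofReal (gumbelCDF (w L + v) (y (Fin.last n)))
            ∂(Measure.pi fun j => gumbelMeasure (w (L.succAbove j))) :=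
          lintegral_indicator (decSet_measurable _) _
      _ = ENNReal.ofReal (w L / (w L + v))
            * ∫⁻ y in decSet (n + 1), ENNReal.ofReal (gumbelCDF (w L + v) (y (Fin.last n)))
            ∂(Measure.pi fun j => gumbelMeasure (w (L.succAbove j))) :=
          lintegral_const_mul' _ _ ENNReal.ofReal_ne_top
      _ = ENNReal.ofReal (w L / (w L + v))
            * ENNReal.ofReal (∏ r : Fin (n + 1),
                w (L.succAbove r) / ((∑ j ∈ Finset.Ici r, w (L.succAbove j)) + (w L + v))) := by
          rw [ih (fun j => w (L.succAbove j)) (fun j => hw _) (w L + v) (by linarith)]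
      _ = ENNReal.ofReal (∏ r : Fin (n + 2), w r / ((∑ j ∈ Finset.Ici r, w j) + v)) := by
          rw [← ENNReal.ofReal_mul (div_nonneg hwl.le hwlv.le), halg]
/-- Plackett-Luce probability of the ordering σ given logits θ. -/
noncomputable def PL {n : ℕ} (θ : Fin n → ℝ) (σ : Equiv.Perm (Fin n)) : ℝ :=
  ∏ r : Fin n, Real.exp (θ (σ r)) / ∑ j ∈ Finset.Ici r, Real.exp (θ (σ j))

/-- Gumbel perturb-and-sort samples from Plackett-Luce: with i.i.d. standard
Gumbel perturbations, the probability that the perturbed scores θ_i + g_i are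
strictly decreasing along a permutation σ equals PL(σ | θ). -/
theorem gumbel_perturb_and_sort {Ω : Type*} [MeasurableSpace Ω]
    (μ : Measure Ω) [IsProbabilityMeasure μ]
    (n : ℕ) (θ : Fin n → ℝ) (g : Fin n → Ω → ℝ)
    (hmeas : ∀ i, Measurable (g i))
    (hindep : iIndepFun g μ)
    (hgumbel : ∀ i t, μ {ω | g i ω ≤ t} = ENNReal.ofReal (Real.exp (-Real.exp (-t))))
    (σ : Equiv.Perm (Fin n)) :
    μ {ω | ∀ r s : Fin n, r < s → θ (σ s) + g (σ s) ω < θ (σ r) + g (σ r) ω}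
      = ENNReal.ofReal (PL θ σ) := by
  obtain _ | m := n
  · have hset : {ω : Ω | ∀ r s : Fin 0, r < s → θ (σ s) + g (σ s) ω < θ (σ r) + g (σ r) ω}
        = Set.univ := by
      ext ω
      simp only [Set.mem_setOf_eq, Set.mem_univ, iff_true]
      exact fun r => r.elim0
    rw [hset, measure_univ, PL]
    simp
  · set w : Fin (m + 1) → ℝ := fun i => Real.exp (θ (σ i)) with hwdef
    have hw : ∀ i, 0 < w i := fun i => Real.exp_pos _
    set X : Fin (m + 1) → Ω → ℝ := fun i ω => θ (σ i) + g (σ i) ω with hXdef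
    have hXmeas : ∀ i, Measurable (X i) := fun i => measurable_const.add (hmeas _)
    have hgσ : iIndepFun (fun i => g (σ i)) μ := by
      rw [iIndepFun_iff_measure_inter_preimage_eq_mul]
      intro S sets hsets
      have hsets' : ∀ j, j ∈ S.image σ → MeasurableSet (sets (σ.symm j)) := by
        intro j hj
        obtain ⟨i, hi, rfl⟩ := Finset.mem_image.mp hj
        simpa using hsets i hi
      have h1 : (⋂ i ∈ S, g (σ i) ⁻¹' sets i) = ⋂ j ∈ S.image σ, g j ⁻¹' sets (σ.symm j) := by
        ext ω
        simp only [Set.mem_iInter, Finset.mem_image]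
        constructor
        · rintro h j ⟨i, hi, rfl⟩
          simpa using h i hi
        · intro h i hi
          have := h (σ i) ⟨i, hi, rfl⟩
          simpa using this
      calc μ (⋂ i ∈ S, g (σ i) ⁻¹' sets i)
          = μ (⋂ j ∈ S.image σ, g j ⁻¹' sets (σ.symm j)) := by rw [h1]
        _ = ∏ j ∈ S.image σ, μ (g j ⁻¹' sets (σ.symm j)) :=
            hindep.measure_inter_preimage_eq_mul _ hsets'
        _ = ∏ i ∈ S, μ (g (σ i) ⁻¹' sets (σ.symm (σ i))) :=
            Finset.prod_image (fun a _ b _ hab => σ.injective hab)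
        _ = ∏ i ∈ S, μ (g (σ i) ⁻¹' sets i) := by simp
    have hXindep : iIndepFun X μ := by
      have := hgσ.comp (fun i => fun t => θ (σ i) + t)
        (fun i => measurable_const.add measurable_id)
      exact this
    have hlaw : ∀ i, Measure.map (X i) μ = gumbelMeasure (w i) := by
      intro i
      haveI : IsProbabilityMeasure (Measure.map (X i) μ) :=
        Measure.isProbabilityMeasure_map (hXmeas i).aemeasurable
      haveI := gumbelMeasure_isProbability (hw i)
      refine MeasureTheory.Measure.ext_of_Iic _ _ (fun t => ?_)
      rw [Measure.map_apply (hXmeas i) measurableSet_Iic, gumbelMeasure_Iic (hw i)]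
      have hpre : X i ⁻¹' Set.Iic t = {ω | g (σ i) ω ≤ t - θ (σ i)} := by
        ext ω
        simp only [hXdef, Set.mem_preimage, Set.mem_Iic, Set.mem_setOf_eq]
        constructor <;> intro h <;> linarith
      rw [hpre, hgumbel (σ i) (t - θ (σ i))]
      rw [gumbelCDF, hwdef]
      rw [show -(t - θ (σ i)) = θ (σ i) + -t by ring, Real.exp_add]
    haveI hprob : ∀ i, IsProbabilityMeasure (gumbelMeasure (w i)) :=
      fun i => gumbelMeasure_isProbability (hw i)
    have hvecmeas : Measurable (fun ω (i : Fin (m + 1)) => X i ω) :=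
      measurable_pi_iff.mpr hXmeas
    have hmap : Measure.map (fun ω i => X i ω) μ = Measure.pi fun i => gumbelMeasure (w i) := by
      refine (Measure.pi_eq fun s hs => ?_).symm
      rw [Measure.map_apply hvecmeas (MeasurableSet.univ_pi hs)]
      have hpre : (fun ω i => X i ω) ⁻¹' Set.pi Set.univ s = ⋂ i, X i ⁻¹' s i := by
        ext ω; simp [Set.mem_pi]
      rw [hpre]
      have h2 : μ (⋂ i, X i ⁻¹' s i) = ∏ i, μ (X i ⁻¹' s i) := by
        have h3 := hXindep.measure_inter_preimage_eq_mul Finset.univ (fun i _ => hs i)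
        simpa using h3
      rw [h2]
      refine Finset.prod_congr rfl fun i _ => ?_
      rw [← hlaw i, Measure.map_apply (hXmeas i) (hs i)]
    have hev : {ω | ∀ r s : Fin (m + 1), r < s → θ (σ s) + g (σ s) ω < θ (σ r) + g (σ r) ω}
        = (fun ω i => X i ω) ⁻¹' decSet (m + 1) := rfl
    rw [hev, ← Measure.map_apply hvecmeas (decSet_measurable _), hmap]
    have hkey := keyB m w hw 0 le_rfl
    have hcdf0 : ∀ t : ℝ, gumbelCDF 0 t = 1 := fun t => by simp [gumbelCDF]
    simp only [hcdf0, ENNReal.ofReal_one] at hkey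
    rw [setLIntegral_one] at hkey
    rw [hkey]
    congr 1
    rw [PL]
    exact Finset.prod_congr rfl fun r _ => by rw [add_zero]
end

section
/- Pairwise marginal of the Gumbel-perturbed scores: if g_a, g_b are independent standard Gumbel and θ_a, θ_b ∈ ℝ, then P(θ_a + g_a > θ_b + g_b) = exp(θ_a)/(exp(θ_a) + exp(θ_b)) (the Bradley–Terry comparison probability). -/
open MeasureTheory ProbabilityTheory Real Set Filter Topology

noncomputable def pdfA (a x : ℝ) : ℝ := Real.exp (-x) * Real.exp (-(a * Real.exp (-x)))

lemma pdfA_nonneg (a x : ℝ) : 0 ≤ pdfA a x :=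
  mul_nonneg (Real.exp_pos _).le (Real.exp_pos _).le

lemma negLog_hasDeriv {s : Set ℝ} (hsub : s ⊆ Ioi 0) :
    ∀ u ∈ s, HasDerivWithinAt (fun u => -Real.log u) (-(u⁻¹)) s u := fun u hu =>
  ((Real.hasDerivAt_log (ne_of_gt (hsub hu))).neg).hasDerivWithinAt

lemma negLog_injOn {s : Set ℝ} (hsub : s ⊆ Ioi 0) :
    InjOn (fun u => -Real.log u) s := fun u hu v hv h => by
  have h' : Real.log u = Real.log v := by linarith [neg_injective h]
  have := congrArg Real.exp h'
  rwa [Real.exp_log (hsub hu), Real.exp_log (hsub hv)] at this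

lemma negLog_point {a : ℝ} {s : Set ℝ} (hsub : s ⊆ Ioi 0) :
    ∀ u ∈ s, |(-(u⁻¹))| • pdfA a ((fun u => -Real.log u) u) = Real.exp (-(a * u)) := by
  intro u hu
  have hu0 : (0:ℝ) < u := hsub hu
  simp only [pdfA, smul_eq_mul, abs_neg, abs_inv, abs_of_pos hu0, neg_neg,
    Real.exp_log hu0]
  rw [← mul_assoc, inv_mul_cancel₀ hu0.ne', one_mul]

lemma key_int (a : ℝ) (ha : 0 < a) {s : Set ℝ} (hs : MeasurableSet s) (hsub : s ⊆ Ioi 0) :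
    IntegrableOn (pdfA a) ((fun u => -Real.log u) '' s) := by
  rw [integrableOn_image_iff_integrableOn_abs_deriv_smul hs (negLog_hasDeriv hsub)
    (negLog_injOn hsub)]
  have base : IntegrableOn (fun u => Real.exp (-(a * u))) s := by
    have := (exp_neg_integrableOn_Ioi 0 ha).mono_set hsub
    simpa [neg_mul] using this
  exact base.congr_fun (fun u hu => (negLog_point hsub u hu).symm) hs

lemma key_eq (a : ℝ) {s : Set ℝ} (hs : MeasurableSet s) (hsub : s ⊆ Ioi 0) :
    ∫ x in (fun u => -Real.log u) '' s, pdfA a x = ∫ u in s, Real.exp (-(a * u)) := by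
  rw [integral_image_eq_integral_abs_deriv_smul hs (negLog_hasDeriv hsub) (negLog_injOn hsub)]
  exact setIntegral_congr_fun hs (negLog_point hsub)

lemma image_neg_log_Ici {c : ℝ} (hc : 0 < c) :
    (fun u => -Real.log u) '' Ici c = Iic (-Real.log c) := by
  ext y
  constructor
  · rintro ⟨u, hu, rfl⟩
    have : Real.log c ≤ Real.log u := Real.log_le_log hc hu
    simpa using this
  · intro hy
    refine ⟨Real.exp (-y), ?_, by simp [Real.log_exp]⟩
    have hy' : y ≤ -Real.log c := hy
    have : Real.log c ≤ -y := by linarith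
    calc c = Real.exp (Real.log c) := (Real.exp_log hc).symm
    _ ≤ Real.exp (-y) := Real.exp_le_exp.mpr this

lemma image_neg_log_Ioi : (fun u => -Real.log u) '' Ioi 0 = univ :=
  eq_univ_of_forall fun y => ⟨Real.exp (-y), Real.exp_pos _, by simp [Real.log_exp]⟩

lemma integral_exp_neg_mul_Ici (a c : ℝ) (ha : 0 < a) :
    ∫ u in Ici c, Real.exp (-(a * u)) = a⁻¹ * Real.exp (-(a * c)) := by
  rw [integral_Ici_eq_integral_Ioi]
  have hder : ∀ u ∈ Ici c,
      HasDerivAt (fun u => -(a⁻¹ * Real.exp (-(a * u)))) (Real.exp (-(a * u))) u := by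
    intro u _
    have h1 : HasDerivAt (fun u : ℝ => -(a * u)) (-a) u := by
      simpa [Pi.neg_def] using ((hasDerivAt_id u).const_mul a).neg
    have h2 := (Real.hasDerivAt_exp (-(a * u))).comp u h1
    have h3 : HasDerivAt (fun u => -(a⁻¹ * Real.exp (-(a * u))))
        (-(a⁻¹ * (Real.exp (-(a * u)) * -a))) u := (h2.const_mul a⁻¹).neg
    convert h3 using 1
    field_simp
  have hint : IntegrableOn (fun u => Real.exp (-(a * u))) (Ioi c) := by
    simpa [neg_mul] using exp_neg_integrableOn_Ioi c ha
  have htend : Tendsto (fun u => -(a⁻¹ * Real.exp (-(a * u)))) atTop (𝓝 0) := by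
    have h0 : Tendsto (fun u : ℝ => a * u) atTop atTop :=
      Tendsto.const_mul_atTop ha tendsto_id
    have h1 : Tendsto (fun u : ℝ => -(a * u)) atTop atBot :=
      tendsto_neg_atBot_iff.mpr h0
    have h2 : Tendsto (fun u => Real.exp (-(a * u))) atTop (𝓝 0) :=
      Real.tendsto_exp_atBot.comp h1
    simpa using (h2.const_mul a⁻¹).neg
  have := integral_Ioi_of_hasDerivAt_of_tendsto' hder hint htend
  rw [this]
  ring

noncomputable def gumbel : Measure ℝ := volume.withDensity fun x => ENNReal.ofReal (pdfA 1 x)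

lemma pdfA_continuous (a : ℝ) : Continuous (pdfA a) := by
  unfold pdfA; continuity

lemma pdfA_meas (a : ℝ) : Measurable fun x => ENNReal.ofReal (pdfA a x) :=
  (ENNReal.continuous_ofReal.comp (pdfA_continuous a)).measurable

lemma integrableOn_pdfA_Iic (t : ℝ) : IntegrableOn (pdfA 1) (Iic t) := by
  have himg : (fun u => -Real.log u) '' Ici (Real.exp (-t)) = Iic t := by
    rw [image_neg_log_Ici (Real.exp_pos _), Real.log_exp, neg_neg]
  exact himg ▸ key_int 1 one_pos measurableSet_Ici
    (fun u hu => lt_of_lt_of_le (Real.exp_pos _) hu)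

lemma integral_pdfA_Iic (t : ℝ) : ∫ x in Iic t, pdfA 1 x = Real.exp (-Real.exp (-t)) := by
  have himg : (fun u => -Real.log u) '' Ici (Real.exp (-t)) = Iic t := by
    rw [image_neg_log_Ici (Real.exp_pos _), Real.log_exp, neg_neg]
  rw [← himg, key_eq 1 measurableSet_Ici (fun u hu => lt_of_lt_of_le (Real.exp_pos _) hu),
    integral_exp_neg_mul_Ici 1 _ one_pos]
  simp

lemma gumbel_Iic (t : ℝ) : gumbel (Iic t) = ENNReal.ofReal (Real.exp (-Real.exp (-t))) := by
  rw [gumbel, withDensity_apply _ measurableSet_Iic,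
    ← ofReal_integral_eq_lintegral_ofReal (integrableOn_pdfA_Iic t)
      (Filter.Eventually.of_forall fun x => pdfA_nonneg _ _),
    integral_pdfA_Iic]

lemma integrable_pdfA (a : ℝ) (ha : 0 < a) : Integrable (pdfA a) := by
  rw [← integrableOn_univ, ← image_neg_log_Ioi]
  exact key_int a ha measurableSet_Ioi subset_rfl

lemma integral_pdfA (a : ℝ) (ha : 0 < a) : ∫ x, pdfA a x = a⁻¹ := by
  rw [← setIntegral_univ, ← image_neg_log_Ioi,
    key_eq a measurableSet_Ioi subset_rfl, ← integral_Ici_eq_integral_Ioi,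
    integral_exp_neg_mul_Ici a 0 ha]
  simp

instance : IsProbabilityMeasure gumbel := by
  constructor
  rw [gumbel, withDensity_apply _ MeasurableSet.univ, Measure.restrict_univ,
    ← ofReal_integral_eq_lintegral_ofReal (integrable_pdfA 1 one_pos)
      (Filter.Eventually.of_forall fun x => pdfA_nonneg _ _),
    integral_pdfA 1 one_pos]
  simp

instance : NullSingletonClass gumbel := by
  constructor
  intro x
  rw [gumbel, withDensity_apply _ (measurableSet_singleton x),
    Measure.restrict_eq_zero.mpr (by simp), lintegral_zero_measure]

lemma map_eq_gumbel {Ω : Type*} [MeasurableSpace Ω] (μ : Measure Ω) [IsProbabilityMeasure μ]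
    {g : Ω → ℝ} (hm : Measurable g)
    (hcdf : ∀ t, μ {ω | g ω ≤ t} = ENNReal.ofReal (Real.exp (-Real.exp (-t)))) :
    μ.map g = gumbel := by
  haveI := Measure.isProbabilityMeasure_map (μ := μ) hm.aemeasurable
  refine Measure.ext_of_Iic _ _ fun t => ?_
  rw [Measure.map_apply hm measurableSet_Iic, gumbel_Iic]
  exact hcdf t

open MeasureTheory ProbabilityTheory

/-- Pairwise marginal of Gumbel-perturbed scores: for independent standard
Gumbel g_a, g_b, P(θ_a + g_a > θ_b + g_b) = exp θ_a / (exp θ_a + exp θ_b). -/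
theorem gumbel_pairwise_bradley_terry {Ω : Type*} [MeasurableSpace Ω]
    (μ : Measure Ω) [IsProbabilityMeasure μ]
    (θa θb : ℝ) (ga gb : Ω → ℝ)
    (hma : Measurable ga) (hmb : Measurable gb)
    (hindep : IndepFun ga gb μ)
    (hga : ∀ t, μ {ω | ga ω ≤ t} = ENNReal.ofReal (Real.exp (-Real.exp (-t))))
    (hgb : ∀ t, μ {ω | gb ω ≤ t} = ENNReal.ofReal (Real.exp (-Real.exp (-t)))) :
    μ {ω | θb + gb ω < θa + ga ω}
      = ENNReal.ofReal (Real.exp θa / (Real.exp θa + Real.exp θb)) := by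
  set c : ℝ := θa - θb with hc
  have hevent : {ω | θb + gb ω < θa + ga ω}
      = (fun ω => (ga ω, gb ω)) ⁻¹' {p : ℝ × ℝ | p.2 < p.1 + c} := by
    ext ω
    simp only [mem_setOf_eq, mem_preimage, hc]
    constructor <;> intro h <;> linarith
  have hS : MeasurableSet {p : ℝ × ℝ | p.2 < p.1 + c} :=
    measurableSet_lt measurable_snd (measurable_fst.add_const _)
  rw [hevent, ← Measure.map_apply (hma.prodMk hmb) hS,
    (indepFun_iff_map_prod_eq_prod_map_map hma.aemeasurable hmb.aemeasurable).mp hindep,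
    map_eq_gumbel μ hma hga, map_eq_gumbel μ hmb hgb, Measure.prod_apply hS]
  have hinner : ∀ x : ℝ, gumbel (Prod.mk x ⁻¹' {p : ℝ × ℝ | p.2 < p.1 + c})
      = ENNReal.ofReal (Real.exp (-Real.exp (-(x + c)))) := by
    intro x
    have : Prod.mk x ⁻¹' {p : ℝ × ℝ | p.2 < p.1 + c} = Iio (x + c) := rfl
    rw [this, measure_congr (Iio_ae_eq_Iic), gumbel_Iic]
  have hg : Measurable fun x : ℝ => ENNReal.ofReal (Real.exp (-Real.exp (-(x + c)))) :=
    (ENNReal.continuous_ofReal.comp (by continuity)).measurable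
  rw [lintegral_congr hinner, gumbel,
    lintegral_withDensity_eq_lintegral_mul _ (pdfA_meas 1) hg]
  have ha : (0:ℝ) < 1 + Real.exp (-c) := by positivity
  have hpoint : ∀ x : ℝ,
      ((fun x => ENNReal.ofReal (pdfA 1 x)) *
        fun x => ENNReal.ofReal (Real.exp (-Real.exp (-(x + c))))) x
      = ENNReal.ofReal (pdfA (1 + Real.exp (-c)) x) := by
    intro x
    simp only [Pi.mul_apply]
    rw [← ENNReal.ofReal_mul (pdfA_nonneg _ _)]
    congr 1
    unfold pdfA
    have h1 : Real.exp (-(x + c)) = Real.exp (-c) * Real.exp (-x) := by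
      rw [← Real.exp_add]; ring_nf
    rw [← Real.exp_add, ← Real.exp_add, ← Real.exp_add]
    congr 1
    rw [h1]; ring
  rw [lintegral_congr hpoint,
    ← ofReal_integral_eq_lintegral_ofReal (integrable_pdfA _ ha)
      (Filter.Eventually.of_forall fun x => pdfA_nonneg _ _),
    integral_pdfA _ ha]
  congr 1
  have h2 : Real.exp (-c) = Real.exp θb / Real.exp θa := by
    rw [hc]; rw [← Real.exp_sub]; ring_nf
  rw [h2]
  have h3 : Real.exp θa ≠ 0 := Real.exp_ne_zero _
  have h4 : Real.exp θa + Real.exp θb ≠ 0 := by positivity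
  field_simp
end
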